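/- Every contraction on a finite-dimensional complex Hilbert space (an operator with operator norm at most 1) can be written as a convex combination of unitary operators. -/

import Mathlib

set_option linter.unusedSectionVars false

open ContinuousLinearMap Complex FiniteDimensional

section Aux

variable {E : Type*} [NormedAddCommGroup E] [InnerProductSpace ℂ E]
  [FiniteDimensional ℂ E] [Nontrivial E]

local notation "⟪" x ", " y "⟫" => @inner ℂ _ _ x y

lemma selfadj_half (p : E →L[ℂ] E) (hp : IsSelfAdjoint p) (hnp : ‖p‖ ≤ 1) :
    ∃ w ∈ unitary (E →L[ℂ] E), p = (1/2 : ℂ) • (w + star w) := by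
  have hpn : IsStarNormal p := hp.isStarNormal
  set f : ℂ → ℂ := fun z => z + Complex.I * (Real.sqrt (1 - z.re ^ 2) : ℝ) with hf_def
  have hf : Continuous f := by fun_prop
  have hspec : ∀ z ∈ spectrum ℂ p, z = (z.re : ℂ) ∧ z.re ^ 2 ≤ 1 := by
    intro z hz
    have h1 : z = (z.re : ℂ) := hp.mem_spectrum_eq_re hz
    refine ⟨h1, ?_⟩
    have h2 : ‖z‖ ≤ ‖p‖ := spectrum.norm_le_norm_of_mem hz
    have h3 : |z.re| ≤ 1 := by
      calc |z.re| ≤ ‖z‖ := by simpa using Complex.abs_re_le_norm z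
        _ ≤ 1 := h2.trans hnp
    nlinarith [abs_nonneg z.re, _root_.sq_abs z.re]
  have hconj : ∀ x s : ℝ, star ((x:ℂ) + Complex.I * (s:ℝ)) = (x:ℂ) - Complex.I * s := by
    intro x s
    rw [RCLike.star_def]
    simp [map_add, map_mul, Complex.conj_I]
    ring
  have hprod : ∀ x s : ℝ, ((x:ℂ) - Complex.I * s) * ((x:ℂ) + Complex.I * s)
      = ((x^2 + s^2 : ℝ) : ℂ) := by
    intro x s
    have := Complex.I_sq
    push_cast
    ring_nf
    rw [Complex.I_sq]
    ring
  have key : ∀ z ∈ spectrum ℂ p, star (f z) * f z = 1 := by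
    intro z hz
    obtain ⟨h1, h2⟩ := hspec z hz
    have hs : (Real.sqrt (1 - z.re ^ 2)) ^ 2 = 1 - z.re ^ 2 := Real.sq_sqrt (by linarith)
    have hre : ((z.re : ℂ)).re = z.re := Complex.ofReal_re _
    rw [hf_def]
    simp only
    rw [h1, hre, hconj, hprod]
    rw [hs]
    norm_num
  refine ⟨cfc f p, ?_, ?_⟩
  · rw [cfc_unitary_iff f p hpn (Continuous.continuousOn hf)]
    exact key
  · have hfs : Continuous (fun z => star (f z)) := by fun_prop
    have h1 : cfc f p + star (cfc f p) = cfc (fun z => f z + star (f z)) p :=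
      ((cfc_add f (fun z => star (f z)) (a := p) (Continuous.continuousOn hf)
          (Continuous.continuousOn hfs)).trans
        (congrArg (fun t => cfc f p + t) (cfc_star f p))).symm
    have h2 : cfc (fun z => f z + star (f z)) p = cfc (fun z : ℂ => 2 * z) p := by
      apply cfc_congr
      intro z hz
      obtain ⟨hz1, _⟩ := hspec z hz
      simp only [hf_def]
      rw [hz1, Complex.ofReal_re, hconj]
      ring
    have h3 : cfc (fun z : ℂ => 2 * z) p = (2:ℂ) • p := by
      rw [cfc_const_mul (2:ℂ) (fun z : ℂ => z) p, cfc_id' ℂ p]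
    rw [h1, h2, h3, smul_smul]
    norm_num

lemma unit_half (a : E →L[ℂ] E) (ha : IsUnit a) (hna : ‖a‖ ≤ 1) :
    ∃ u v, u ∈ unitary (E →L[ℂ] E) ∧ v ∈ unitary (E →L[ℂ] E) ∧
      a = (1/2 : ℂ) • (u + v) := by
  set s : E →L[ℂ] E := star a * a with hs_def
  have hssa : IsSelfAdjoint s := IsSelfAdjoint.star_mul_self a
  have hsu : IsUnit s := (IsUnit.star ha).mul ha
  set p : E →L[ℂ] E := cfc Real.sqrt s with hp_def
  have hpsa : IsSelfAdjoint p := cfc_predicate Real.sqrt s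
  have hpp : p * p = s := by
    rw [hp_def, ← cfc_mul Real.sqrt Real.sqrt s
      (Continuous.continuousOn Real.continuous_sqrt)
      (Continuous.continuousOn Real.continuous_sqrt)]
    have : cfc (fun x : ℝ => Real.sqrt x * Real.sqrt x) s = cfc (fun x : ℝ => x) s := by
      apply cfc_congr
      intro x hx
      exact Real.mul_self_sqrt (spectrum_star_mul_self_nonneg x hx)
    rw [this, cfc_id' ℝ s]
  -- p is a unit
  have hpu : IsUnit p := by
    have h1 : p * (p * ↑hsu.unit⁻¹) = 1 := by
      rw [← mul_assoc, hpp]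
      exact_mod_cast hsu.mul_val_inv
    have h2 : (↑hsu.unit⁻¹ * p) * p = 1 := by
      rw [mul_assoc, hpp]
      exact_mod_cast hsu.val_inv_mul
    have h3 : ↑hsu.unit⁻¹ * p = p * ↑hsu.unit⁻¹ := by
      calc ↑hsu.unit⁻¹ * p = (↑hsu.unit⁻¹ * p) * (p * (p * ↑hsu.unit⁻¹)) := by rw [h1, mul_one]
        _ = ((↑hsu.unit⁻¹ * p) * p) * (p * ↑hsu.unit⁻¹) := by simp only [mul_assoc]
        _ = p * ↑hsu.unit⁻¹ := by rw [h2, one_mul]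
    exact ⟨⟨p, p * ↑hsu.unit⁻¹, h1, by rw [← h3, mul_assoc, hpp]; exact_mod_cast hsu.val_inv_mul⟩, rfl⟩
  set q : E →L[ℂ] E := ↑hpu.unit⁻¹ with hq_def
  have hqp : q * p = 1 := hpu.unit.inv_mul
  have hpq : p * q = 1 := hpu.unit.mul_inv
  have hqsa : star q = q := by
    have h1 : p * star q = 1 := by
      have := congrArg star hqp
      rwa [star_mul, star_one, hpsa.star_eq] at this
    calc star q = (q * p) * star q := by rw [hqp, one_mul]
      _ = q * (p * star q) := by rw [mul_assoc]
      _ = q := by rw [h1, mul_one]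
  -- u := a * q is unitary
  set u : E →L[ℂ] E := a * q with hu_def
  have huu : star u * u = 1 := by
    have hsu' : star u = q * star a := by rw [hu_def, star_mul, hqsa]
    rw [hsu', hu_def]
    calc q * star a * (a * q) = (q * (star a * a)) * q := by simp only [mul_assoc]
      _ = (q * (p * p)) * q := by rw [← hs_def, ← hpp]
      _ = (q * p) * (p * q) := by simp only [mul_assoc]
      _ = 1 := by rw [hqp, hpq, one_mul]
  have huunit : IsUnit u := ha.mul (hpu.unit⁻¹).isUnit
  have huu' : u * star u = 1 := by
    have h4 : star u = ↑huunit.unit⁻¹ := by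
      have h5 := congrArg (· * (↑huunit.unit⁻¹ : E →L[ℂ] E)) huu
      simpa [mul_assoc, huunit.mul_val_inv] using h5
    rw [h4]; exact huunit.mul_val_inv
  have humem : u ∈ unitary (E →L[ℂ] E) := Unitary.mem_iff.mpr ⟨huu, huu'⟩
  -- a = u * p
  have haup : a = u * p := by rw [hu_def, mul_assoc, hqp, mul_one]
  -- ‖p‖ ≤ 1
  have hpn : ‖p‖ ≤ 1 := by
    have h5 : ‖p‖ * ‖p‖ = ‖star p * p‖ := (CStarRing.norm_star_mul_self).symm
    rw [hpsa.star_eq, hpp] at h5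
    have h6 : ‖s‖ = ‖a‖ * ‖a‖ := by rw [hs_def]; exact CStarRing.norm_star_mul_self
    nlinarith [norm_nonneg p, norm_nonneg a]
  obtain ⟨w, hw, hwp⟩ := selfadj_half p hpsa hpn
  refine ⟨u * w, u * star w, mul_mem humem hw,
    mul_mem humem (Unitary.star_mem hw), ?_⟩
  rw [haup, hwp, mul_smul_comm, mul_add]

lemma step_norm (A : E →L[ℂ] E) (hA : ‖A‖ ≤ 1) (e f : E) (he : ‖e‖ = 1) (hf : ‖f‖ = 1)
    (heker : A e = 0) (hfran : ∀ x : E, ⟪A x, f⟫ = 0) :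
    ‖A + (innerSL ℂ e).smulRight f‖ ≤ 1 := by
  apply opNorm_le_bound _ zero_le_one
  intro x
  set c : ℂ := ⟪e, x⟫ with hc
  set y : E := x - c • e with hy
  have hee : ⟪e, e⟫ = 1 := by
    rw [inner_self_eq_norm_sq_to_K, he]; norm_num
  have hey : ⟪e, y⟫ = 0 := by
    rw [hy, inner_sub_right, inner_smul_right, hee, mul_one, hc, sub_self]
  have hxsq : ‖x‖ ^ 2 = ‖c‖ ^ 2 + ‖y‖ ^ 2 := by
    have hx : x = c • e + y := by rw [hy]; abel
    have hip : ⟪c • e, y⟫ = 0 := by rw [inner_smul_left, hey, mul_zero]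
    rw [hx, @norm_add_sq ℂ, hip]
    simp [norm_smul, he]
  have hAx : A x = A y := by
    have hx : x = c • e + y := by rw [hy]; abel
    rw [hx, map_add, map_smul, heker, smul_zero, zero_add]
  have hAy : ‖A y‖ ≤ ‖y‖ := by
    calc ‖A y‖ ≤ ‖A‖ * ‖y‖ := le_opNorm A y
      _ ≤ 1 * ‖y‖ := by gcongr
      _ = ‖y‖ := one_mul _
  have happ : (A + (innerSL ℂ e).smulRight f) x = A x + c • f := by
    simp [hc]
  rw [happ]
  have horth : ⟪A x, c • f⟫ = 0 := by rw [inner_smul_right, hfran, mul_zero]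
  have hsq : ‖A x + c • f‖ ^ 2 = ‖A x‖ ^ 2 + ‖c‖ ^ 2 := by
    rw [@norm_add_sq ℂ, horth]
    simp [norm_smul, hf]
  have h1 : ‖A x + c • f‖ ^ 2 ≤ ‖x‖ ^ 2 := by
    rw [hsq, hxsq, hAx]
    nlinarith [norm_nonneg (A y), norm_nonneg y]
  have h2 : (0:ℝ) ≤ ‖x‖ := norm_nonneg x
  nlinarith [norm_nonneg (A x + c • f), h1, h2]

def IsCC (A : E →L[ℂ] E) : Prop :=
  ∃ (n : ℕ) (p : Fin n → ℝ) (U : Fin n → E →L[ℂ] E),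
    (∀ i, 0 ≤ p i) ∧ ∑ i, p i = 1 ∧ (∀ i, U i ∈ unitary (E →L[ℂ] E)) ∧
    A = ∑ i, (p i : ℂ) • U i

lemma isCC_midpoint {b c : E →L[ℂ] E} (hb : IsCC b) (hc : IsCC c) :
    IsCC ((1/2 : ℂ) • (b + c)) := by
  obtain ⟨m, p1, U1, hp1, hs1, hU1, hb1⟩ := hb
  obtain ⟨n, p2, U2, hp2, hs2, hU2, hc1⟩ := hc
  refine ⟨m + n, Fin.append (fun i => p1 i / 2) (fun j => p2 j / 2),
    Fin.append U1 U2, ?_, ?_, ?_, ?_⟩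
  · intro i
    refine Fin.addCases (fun i => ?_) (fun j => ?_) i
    · rw [Fin.append_left]; linarith [hp1 i]
    · rw [Fin.append_right]; linarith [hp2 j]
  · rw [Fin.sum_univ_add]
    simp only [Fin.append_left, Fin.append_right]
    rw [← Finset.sum_div, ← Finset.sum_div, hs1, hs2]
    norm_num
  · intro i
    refine Fin.addCases (fun i => ?_) (fun j => ?_) i
    · rw [Fin.append_left]; exact hU1 i
    · rw [Fin.append_right]; exact hU2 j
  · rw [Fin.sum_univ_add]
    simp only [Fin.append_left, Fin.append_right]
    rw [hb1, hc1, smul_add, Finset.smul_sum, Finset.smul_sum]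
    congr 1 <;> (apply Finset.sum_congr rfl; intro i _; rw [smul_smul]; push_cast; ring_nf)

lemma isCC_of_unit (a : E →L[ℂ] E) (ha : IsUnit a) (hna : ‖a‖ ≤ 1) : IsCC a := by
  obtain ⟨u, v, hu, hv, huv⟩ := unit_half a ha hna
  refine ⟨2, ![1/2, 1/2], ![u, v], ?_, ?_, ?_, ?_⟩
  · intro i; fin_cases i <;> norm_num
  · simp [Fin.sum_univ_two]; norm_num
  · intro i; fin_cases i <;> assumption
  · rw [huv]
    rw [Fin.sum_univ_two]
    norm_num

lemma isUnit_of_ker_eq_bot (A : E →L[ℂ] E) (h : LinearMap.ker (A : E →ₗ[ℂ] E) = ⊥) : IsUnit A := by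
  have hinj : Function.Injective A := by
    rw [← ContinuousLinearMap.coe_coe A]
    exact LinearMap.ker_eq_bot.mp h
  have hbij : Function.Bijective A :=
    ⟨hinj, (LinearMap.injective_iff_surjective (f := (A : E →ₗ[ℂ] E))).mp hinj⟩
  let e₀ : E ≃ₗ[ℂ] E := LinearEquiv.ofBijective (A : E →ₗ[ℂ] E) hbij
  let e : E ≃L[ℂ] E := LinearEquiv.toContinuousLinearEquiv e₀
  refine ⟨⟨A, (e.symm : E →L[ℂ] E), ?_, ?_⟩, rfl⟩
  · ext x
    simp only [ContinuousLinearMap.mul_apply, ContinuousLinearMap.one_apply,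
      ContinuousLinearEquiv.coe_coe]
    exact e.apply_symm_apply x
  · ext x
    simp only [ContinuousLinearMap.mul_apply, ContinuousLinearMap.one_apply,
      ContinuousLinearEquiv.coe_coe]
    exact e.symm_apply_apply x

lemma step_ker (A : E →L[ℂ] E) (e f : E) (he : ‖e‖ = 1) (hf : ‖f‖ = 1) (heker : A e = 0)
    (hfran : ∀ x : E, ⟪A x, f⟫ = 0) :
    LinearMap.ker ((A + (innerSL ℂ e).smulRight f : E →L[ℂ] E) : E →ₗ[ℂ] E) < LinearMap.ker (A : E →ₗ[ℂ] E) := by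
  set R : E →L[ℂ] E := (innerSL ℂ e).smulRight f with hR_def
  have hAe : (A + R) e = f := by
    simp [hR_def, heker]
    rw [he]
    norm_num
  have hle : LinearMap.ker ((A + R : E →L[ℂ] E) : E →ₗ[ℂ] E) ≤ LinearMap.ker (A : E →ₗ[ℂ] E) := by
    rw [SetLike.le_def]
    intro x hx
    rw [LinearMap.mem_ker] at hx ⊢
    have hx' : A x + (⟪e, x⟫ : ℂ) • f = 0 := by
      simpa [hR_def] using hx
    have hinner : (starRingEnd ℂ) ⟪e, x⟫ = 0 := by
      have h0 := congrArg (fun z => ⟪z, f⟫) hx'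
      simpa [inner_add_left, inner_smul_left, hfran x,
        inner_self_eq_norm_sq_to_K, hf] using h0
    have hc : (⟪e, x⟫ : ℂ) = 0 := by
      have := congrArg (starRingEnd ℂ) hinner
      simpa using this
    rw [hc, zero_smul, add_zero] at hx'
    exact hx'
  refine lt_of_le_of_ne hle (fun heq => ?_)
  have he1 : e ∈ LinearMap.ker (A : E →ₗ[ℂ] E) := LinearMap.mem_ker.mpr heker
  rw [← heq, LinearMap.mem_ker, ContinuousLinearMap.coe_coe, hAe] at he1
  rw [he1, norm_zero] at hf
  exact absurd hf (by norm_num)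

lemma main_ind (k : ℕ) : ∀ A : E →L[ℂ] E, ‖A‖ ≤ 1 →
    Module.finrank ℂ (LinearMap.ker (A : E →ₗ[ℂ] E)) ≤ k → IsCC A := by
  induction k with
  | zero =>
    intro A hA hk
    have hker : LinearMap.ker (A : E →ₗ[ℂ] E) = ⊥ := Submodule.finrank_eq_zero.mp (Nat.le_zero.mp hk)
    exact isCC_of_unit A (isUnit_of_ker_eq_bot A hker) hA
  | succ k ih =>
    intro A hA hk
    by_cases hker : LinearMap.ker (A : E →ₗ[ℂ] E) = ⊥
    · exact isCC_of_unit A (isUnit_of_ker_eq_bot A hker) hA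
    -- pick unit e in the kernel
    obtain ⟨e₀, he₀mem, he₀⟩ := Submodule.exists_mem_ne_zero_of_ne_bot hker
    set e : E := ((‖e₀‖⁻¹ : ℝ) : ℂ) • e₀ with he_def
    have he : ‖e‖ = 1 := by
      rw [he_def, norm_smul, Complex.norm_real, Real.norm_eq_abs, abs_inv, abs_norm]
      field_simp [norm_ne_zero_iff.mpr he₀]
    have heker : A e = 0 := by
      rw [he_def, map_smul, show A e₀ = 0 from LinearMap.mem_ker.mp he₀mem, smul_zero]
    -- range is not all of E
    have hrange : LinearMap.range (A : E →ₗ[ℂ] E) ≠ ⊤ := by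
      intro htop
      apply hker
      have hsurj : Function.Surjective (A : E →ₗ[ℂ] E) := LinearMap.range_eq_top.mp htop
      have hinj : Function.Injective (A : E →ₗ[ℂ] E) :=
        (LinearMap.injective_iff_surjective (f := (A : E →ₗ[ℂ] E))).mpr hsurj
      rw [Submodule.eq_bot_iff]
      intro x hx
      have hx0 : A x = 0 := LinearMap.mem_ker.mp hx
      exact hinj (by simpa using hx0)
    have horthne : (LinearMap.range (A : E →ₗ[ℂ] E))ᗮ ≠ ⊥ := fun hbot =>
      hrange (Submodule.orthogonal_eq_bot_iff.mp hbot)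
    obtain ⟨f₀, hf₀mem, hf₀⟩ := Submodule.exists_mem_ne_zero_of_ne_bot horthne
    set f : E := ((‖f₀‖⁻¹ : ℝ) : ℂ) • f₀ with hf_def
    have hf : ‖f‖ = 1 := by
      rw [hf_def, norm_smul, Complex.norm_real, Real.norm_eq_abs, abs_inv, abs_norm]
      field_simp [norm_ne_zero_iff.mpr hf₀]
    have hfran : ∀ x : E, ⟪A x, f⟫ = 0 := by
      intro x
      rw [hf_def, inner_smul_right]
      rw [(Submodule.mem_orthogonal _ f₀).mp hf₀mem (A x) ⟨x, rfl⟩, mul_zero]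
    have hfran' : ∀ x : E, ⟪A x, -f⟫ = 0 := by
      intro x
      rw [inner_neg_right, hfran x, neg_zero]
    have hfneg : ‖(-f : E)‖ = 1 := by rw [norm_neg]; exact hf
    set R : E →L[ℂ] E := (innerSL ℂ e).smulRight f with hR_def
    have hsub : A - R = A + (innerSL ℂ e).smulRight (-f) := by
      ext x
      simp [hR_def]
      abel
    -- kernels shrink
    have hker1 : LinearMap.ker ((A + R : E →L[ℂ] E) : E →ₗ[ℂ] E) < LinearMap.ker (A : E →ₗ[ℂ] E) :=
      step_ker A e f he hf heker hfran
    have hker2 : LinearMap.ker ((A - R : E →L[ℂ] E) : E →ₗ[ℂ] E) < LinearMap.ker (A : E →ₗ[ℂ] E) := by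
      rw [hsub]
      exact step_ker A e (-f) he hfneg heker hfran'
    have hrank1 : Module.finrank ℂ (LinearMap.ker ((A + R : E →L[ℂ] E) : E →ₗ[ℂ] E)) ≤ k := by
      have := Submodule.finrank_lt_finrank_of_lt hker1
      omega
    have hrank2 : Module.finrank ℂ (LinearMap.ker ((A - R : E →L[ℂ] E) : E →ₗ[ℂ] E)) ≤ k := by
      have := Submodule.finrank_lt_finrank_of_lt hker2
      omega
    have hnorm1 : ‖A + R‖ ≤ 1 := step_norm A hA e f he hf heker hfran
    have hnorm2 : ‖A - R‖ ≤ 1 := by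
      rw [hsub]
      exact step_norm A hA e (-f) he hfneg heker hfran'
    have hcc1 := ih (A + R) hnorm1 hrank1
    have hcc2 := ih (A - R) hnorm2 hrank2
    have hmid : A = (1/2 : ℂ) • ((A + R) + (A - R)) := by
      have h1 : (A + R) + (A - R) = A + A := by abel
      rw [h1, ← two_smul ℂ A, smul_smul]
      norm_num
    rw [hmid]
    exact isCC_midpoint hcc1 hcc2

end Aux

/-- Every contraction on a finite-dimensional complex Hilbert space is a convex
combination of unitary operators. -/
theorem stmt_1 (E : Type*) [NormedAddCommGroup E] [InnerProductSpace ℂ E]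
    [FiniteDimensional ℂ E] (A : E →L[ℂ] E) (hA : ‖A‖ ≤ 1) :
    ∃ (n : ℕ) (p : Fin n → ℝ) (U : Fin n → E →L[ℂ] E),
      (∀ i, 0 ≤ p i) ∧ ∑ i, p i = 1 ∧ (∀ i, U i ∈ unitary (E →L[ℂ] E)) ∧
      A = ∑ i, (p i : ℂ) • U i := by
  rcases subsingleton_or_nontrivial E with hE | hE
  · refine ⟨1, fun _ => 1, fun _ => 1, fun _ => zero_le_one, by simp,
      fun _ => one_mem (unitary (E →L[ℂ] E)), ?_⟩
    ext x
    exact Subsingleton.elim _ _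
  · obtain ⟨n, p, U, h1, h2, h3, h4⟩ :=
      main_ind (Module.finrank ℂ (LinearMap.ker (A : E →ₗ[ℂ] E))) A hA le_rfl
    exact ⟨n, p, U, h1, h2, h3, h4⟩
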